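/- Let X be a Banach space, V ⊂ X a closed subspace of finite codimension m, and T : X → Y bounded linear. Then for every k > m there is a constant C depending only on k and m such that D_k(T) ≤ C · D_m(T) · D_{k−m}(T|_V). -/

import Mathlib

/-- `Vol(x_1,…,x_k) = ‖x_1‖ ∏_{i≥2} d(x_i, span{x_j : j < i})`; note that the distance of
`x 0` to the span of the empty family is `‖x 0‖`. -/
noncomputable def Vol {Y : Type*} [NormedAddCommGroup Y] [NormedSpace ℝ Y]
    {k : ℕ} (x : Fin k → Y) : ℝ :=
  ∏ i : Fin k, Metric.infDist (x i) (Submodule.span ℝ (x '' {j | j < i}) : Set Y)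

/-- `D_k(T) = sup { Vol(Tx_1,…,Tx_k) : ‖x_i‖ = 1 }`. -/
noncomputable def Dk {X Y : Type*} [NormedAddCommGroup X] [NormedSpace ℝ X]
    [NormedAddCommGroup Y] [NormedSpace ℝ Y] (k : ℕ) (T : X →L[ℝ] Y) : ℝ :=
  sSup {v : ℝ | ∃ x : Fin k → X, (∀ i, ‖x i‖ = 1) ∧ v = Vol (fun i => T (x i))}


open Metric Submodule

variable {Y : Type*} [NormedAddCommGroup Y] [NormedSpace ℝ Y]

lemma infDist_add_mem_le (M : Submodule ℝ Y) {g : Y} (hg : g ∈ M) (q : Y) :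
    infDist (q + g) (M : Set Y) ≤ infDist q (M : Set Y) := by
  apply le_of_forall_pos_le_add
  intro ε hε
  obtain ⟨z, hz, hd⟩ := (infDist_lt_iff ⟨0, M.zero_mem⟩).1
    (lt_add_of_pos_right (infDist q (M : Set Y)) hε)
  calc infDist (q + g) (M : Set Y) ≤ dist (q + g) (z + g) :=
        infDist_le_dist_of_mem (M.add_mem hz hg)
    _ = dist q z := by simp [dist_eq_norm]
    _ ≤ infDist q (M : Set Y) + ε := hd.le

lemma infDist_add_mem (M : Submodule ℝ Y) {g : Y} (hg : g ∈ M) (q : Y) :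
    infDist (q + g) (M : Set Y) = infDist q (M : Set Y) := by
  refine le_antisymm (infDist_add_mem_le M hg q) ?_
  have := infDist_add_mem_le M (M.neg_mem hg) (q + g)
  simpa using this

lemma infDist_smul_le (M : Submodule ℝ Y) (c : ℝ) (q : Y) :
    infDist (c • q) (M : Set Y) ≤ |c| * infDist q (M : Set Y) := by
  rcases eq_or_ne c 0 with rfl | hc
  · simpa using infDist_le_dist_of_mem (M.zero_mem) (x := (0:Y)) |>.trans (by simp)
  apply le_of_forall_pos_le_add
  intro ε hε
  have hc' : 0 < |c| := abs_pos.2 hc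
  obtain ⟨z, hz, hd⟩ := (infDist_lt_iff ⟨0, M.zero_mem⟩).1
    (lt_add_of_pos_right (infDist q (M : Set Y)) (div_pos hε hc'))
  calc infDist (c • q) (M : Set Y) ≤ dist (c • q) (c • z) :=
        infDist_le_dist_of_mem (M.smul_mem c hz)
    _ = |c| * dist q z := by
        rw [dist_eq_norm, dist_eq_norm, ← smul_sub, norm_smul, Real.norm_eq_abs]
    _ ≤ |c| * (infDist q (M : Set Y) + ε / |c|) := by
        exact mul_le_mul_of_nonneg_left hd.le hc'.le
    _ = |c| * infDist q (M : Set Y) + ε := by field_simp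

noncomputable def volAux (F : Submodule ℝ Y) : List Y → ℝ
  | [] => 1
  | a :: l => infDist a (F : Set Y) * volAux (F ⊔ span ℝ {a}) l

@[simp] lemma volAux_nil (F : Submodule ℝ Y) : volAux F ([] : List Y) = 1 := rfl

lemma volAux_cons (F : Submodule ℝ Y) (a : Y) (l : List Y) :
    volAux F (a :: l) = infDist a (F : Set Y) * volAux (F ⊔ span ℝ {a}) l := rfl

lemma volAux_nonneg (F : Submodule ℝ Y) (l : List Y) : 0 ≤ volAux F l := by
  induction l generalizing F with
  | nil => norm_num [volAux]
  | cons a l ih => exact mul_nonneg infDist_nonneg (ih _)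

lemma infDist_anti (x : Y) {F G : Submodule ℝ Y} (h : F ≤ G) :
    infDist x (G : Set Y) ≤ infDist x (F : Set Y) :=
  infDist_le_infDist_of_subset h ⟨0, F.zero_mem⟩

lemma volAux_anti {F G : Submodule ℝ Y} (h : F ≤ G) (l : List Y) :
    volAux G l ≤ volAux F l := by
  induction l generalizing F G with
  | nil => simp
  | cons a l ih =>
      rw [volAux_cons, volAux_cons]
      exact mul_le_mul (infDist_anti a h) (ih (sup_le_sup_right h _))
        (volAux_nonneg _ _) infDist_nonneg

lemma volAux_append (F : Submodule ℝ Y) (p q : List Y) :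
    volAux F (p ++ q) = volAux F p * volAux (F ⊔ span ℝ {y | y ∈ p}) q := by
  induction p generalizing F with
  | nil => simp [volAux_cons]
  | cons a p ih =>
      rw [List.cons_append, volAux_cons, volAux_cons, ih, mul_assoc]
      congr 3
      rw [sup_assoc]
      congr 1
      rw [← Submodule.span_union]
      congr 1
      ext y; simp [Set.mem_insert_iff, or_comm]

lemma volAux_zero_mem (F : Submodule ℝ Y) {l : List Y} (h : (0:Y) ∈ l) :
    volAux F l = 0 := by
  induction l generalizing F with
  | nil => simp at h
  | cons a l ih =>
      rcases List.mem_cons.1 h with h | h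
      · rw [volAux_cons, ← h]
        simp [infDist_zero_of_mem F.zero_mem]
      · rw [volAux_cons, ih _ h, mul_zero]

lemma volAux_le_prod_norm (F : Submodule ℝ Y) (l : List Y) :
    volAux F l ≤ (l.map (fun y => ‖y‖)).prod := by
  induction l generalizing F with
  | nil => simp
  | cons a l ih =>
      rw [volAux_cons, List.map_cons, List.prod_cons]
      refine mul_le_mul ?_ (ih _) (volAux_nonneg _ _) (norm_nonneg _)
      simpa using infDist_le_dist_of_mem F.zero_mem

lemma volAux_ofFn (F : Submodule ℝ Y) {k : ℕ} (x : Fin k → Y) :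
    volAux F (List.ofFn x) =
      ∏ i : Fin k, infDist (x i) ((F ⊔ span ℝ (x '' {j | j < i}) : Submodule ℝ Y) : Set Y) := by
  induction k generalizing F with
  | zero => simp [List.ofFn_zero]
  | succ k ih =>
      rw [List.ofFn_succ, volAux_cons, ih, Fin.prod_univ_succ]
      congr 1
      · congr 1
        have : (x '' {j | j < 0}) = (∅ : Set Y) := by
          ext y; simp [Fin.not_lt_zero]
        rw [this]
        simp
      · apply Finset.prod_congr rfl
        intro i _
        congr 2
        rw [sup_assoc]
        congr 1
        have : x '' {j | j < i.succ} = {x 0} ∪ (x ∘ Fin.succ) '' {j | j < i} := by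
          ext y
          constructor
          · rintro ⟨j, hj, rfl⟩
            rcases Fin.eq_zero_or_eq_succ j with rfl | ⟨j', rfl⟩
            · exact Or.inl rfl
            · exact Or.inr ⟨j', by simpa [Fin.succ_lt_succ_iff] using hj, rfl⟩
          · rintro (rfl | ⟨j', hj', rfl⟩)
            · exact ⟨0, Fin.succ_pos i, rfl⟩
            · exact ⟨j'.succ, by simpa [Fin.succ_lt_succ_iff] using hj', rfl⟩
        rw [this, Submodule.span_union]; rfl

lemma vol_eq_volAux {k : ℕ} (x : Fin k → Y) : Vol x = volAux ⊥ (List.ofFn x) := by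
  rw [volAux_ofFn, Vol]
  simp

lemma swap_core (F : Submodule ℝ Y) (a b : Y) :
    infDist a (F : Set Y) * infDist b ((F ⊔ span ℝ {a} : Submodule ℝ Y) : Set Y) ≤
      2 * (infDist b (F : Set Y) *
        infDist a ((F ⊔ span ℝ {b} : Submodule ℝ Y) : Set Y)) := by
  set A := infDist a (F : Set Y) with hA_def
  set B := infDist b ((F ⊔ span ℝ {a} : Submodule ℝ Y) : Set Y) with hB_def
  set A' := infDist b (F : Set Y) with hA'_def
  set B' := infDist a ((F ⊔ span ℝ {b} : Submodule ℝ Y) : Set Y) with hB'_def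
  have hBA' : B ≤ A' := infDist_anti b le_sup_left
  have hB'A : B' ≤ A := infDist_anti a le_sup_left
  have hA0 : 0 ≤ A := infDist_nonneg
  have hB0 : 0 ≤ B := infDist_nonneg
  have hA'0 : 0 ≤ A' := infDist_nonneg
  have hB'0 : 0 ≤ B' := infDist_nonneg
  rcases eq_or_lt_of_le hA'0 with h0 | hA'pos
  · have hB : B = 0 := le_antisymm (hBA'.trans h0.ge) hB0
    simp [hB, ← h0]
  -- main case
  have key : ∀ ε : ℝ, 0 < ε → ε ≤ A' → A * B ≤ (B' + ε) * (2 * A' + ε) := by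
    intro ε hε hεA'
    obtain ⟨y, hy, hdy⟩ := (infDist_lt_iff ⟨0, (F ⊔ span ℝ {b}).zero_mem⟩).1
      (lt_add_of_pos_right B' hε)
    obtain ⟨f, hf, z, hz, hfz⟩ := Submodule.mem_sup.1 hy
    obtain ⟨t, rfl⟩ := Submodule.mem_span_singleton.1 hz
    obtain ⟨f', hf', hdf'⟩ := (infDist_lt_iff ⟨0, F.zero_mem⟩).1
      (lt_add_of_pos_right A' hε)
    have hyn : ‖a - f - t • b‖ < B' + ε := by
      have : dist a y < B' + ε := hdy
      rw [← hfz] at this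
      rw [dist_eq_norm] at this
      rwa [sub_sub]
    have hbn : ‖b - f'‖ < A' + ε := by rwa [dist_eq_norm] at hdf'
    have hA_le : A ≤ B' + ε + |t| * (A' + ε) := by
      have hmem : f + t • f' ∈ F := F.add_mem hf (F.smul_mem t hf')
      have : A ≤ dist a (f + t • f') := infDist_le_dist_of_mem hmem
      rw [dist_eq_norm] at this
      have heq : a - (f + t • f') = (a - f - t • b) + t • (b - f') := by
        rw [smul_sub]; abel
      calc A ≤ ‖a - (f + t • f')‖ := this
        _ ≤ ‖a - f - t • b‖ + ‖t • (b - f')‖ := by rw [heq]; exact norm_add_le _ _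
        _ ≤ (B' + ε) + |t| * (A' + ε) := by
            rw [norm_smul, Real.norm_eq_abs]
            exact add_le_add hyn.le (mul_le_mul_of_nonneg_left hbn.le (abs_nonneg t))
    rcases le_or_gt (|t| * A') (B' + ε) with hcase | hcase
    · -- |t| A' ≤ B' + ε
      have h1 : A * B ≤ (B' + ε + |t| * (A' + ε)) * A' :=
        mul_le_mul hA_le hBA' hB0 (by positivity)
      nlinarith [mul_le_mul_of_nonneg_right hcase hε.le, abs_nonneg t]
    · -- |t| A' > B' + ε, t ≠ 0
      have ht : 0 < |t| := by
        rcases (abs_nonneg t).eq_or_lt with h | h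
        · exfalso; rw [← h] at hcase; simp at hcase; nlinarith
        · exact h
      have htne : t ≠ 0 := by simpa [abs_pos] using ht
      have hBle : B * |t| ≤ B' + ε := by
        have hmem : t⁻¹ • (a - f) ∈ F ⊔ span ℝ {a} := by
          have : t⁻¹ • a - t⁻¹ • f ∈ F ⊔ span ℝ {a} := by
            apply Submodule.sub_mem
            · exact Submodule.mem_sup_right (Submodule.mem_span_singleton.2 ⟨t⁻¹, rfl⟩)
            · exact Submodule.mem_sup_left (F.smul_mem _ hf)
          simpa [smul_sub] using this
        have h2 : B ≤ dist b (t⁻¹ • (a - f)) := infDist_le_dist_of_mem hmem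
        have h3 : dist b (t⁻¹ • (a - f)) = ‖a - f - t • b‖ / |t| := by
          rw [dist_eq_norm]
          have : b - t⁻¹ • (a - f) = (-t⁻¹) • (a - f - t • b) := by
            have h4 : t⁻¹ * t = 1 := inv_mul_cancel₀ htne
            match_scalars <;> simp [h4] <;> ring
          rw [this, norm_smul, Real.norm_eq_abs, abs_neg, abs_inv]
          field_simp
        rw [h3] at h2
        calc B * |t| ≤ (‖a - f - t • b‖ / |t|) * |t| := mul_le_mul_of_nonneg_right h2 ht.le
          _ = ‖a - f - t • b‖ := by field_simp
          _ ≤ B' + ε := hyn.le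
      nlinarith [mul_le_mul_of_nonneg_right hA_le hB0, mul_le_mul_of_nonneg_left hBle hA'0,
        mul_le_mul_of_nonneg_left hBA' (by positivity : (0:ℝ) ≤ B' + ε)]
  -- pass to the limit
  apply le_of_forall_pos_le_add
  intro ε' hε'
  set D := B' + 2 * A' + 1 with hD
  have hDpos : 0 < D := by positivity
  set ε := min 1 (min A' (ε' / D)) with hε_def
  have hεpos : 0 < ε := by
    apply lt_min (by norm_num)
    exact lt_min hA'pos (div_pos hε' hDpos)
  have hε1 : ε ≤ 1 := min_le_left _ _
  have hεA' : ε ≤ A' := (min_le_right _ _).trans (min_le_left _ _)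
  have hεD : ε * D ≤ ε' := by
    have : ε ≤ ε' / D := (min_le_right _ _).trans (min_le_right _ _)
    calc ε * D ≤ (ε' / D) * D := mul_le_mul_of_nonneg_right this hDpos.le
      _ = ε' := by field_simp
  have := key ε hεpos hεA'
  nlinarith [hεpos, hB'0, hA'0]

lemma volAux_swap (F : Submodule ℝ Y) (a b : Y) (l : List Y) :
    volAux F (a :: b :: l) ≤ 2 * volAux F (b :: a :: l) := by
  rw [volAux_cons, volAux_cons, volAux_cons, volAux_cons]
  have hsup : F ⊔ span ℝ {a} ⊔ span ℝ {b} = F ⊔ span ℝ {b} ⊔ span ℝ {a} :=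
    sup_right_comm F _ _
  rw [hsup]
  have h := swap_core F a b
  calc infDist a (F : Set Y) *
        (infDist b ((F ⊔ span ℝ {a} : Submodule ℝ Y) : Set Y) *
          volAux (F ⊔ span ℝ {b} ⊔ span ℝ {a}) l)
      = (infDist a (F : Set Y) * infDist b ((F ⊔ span ℝ {a} : Submodule ℝ Y) : Set Y)) *
          volAux (F ⊔ span ℝ {b} ⊔ span ℝ {a}) l := by ring
    _ ≤ (2 * (infDist b (F : Set Y) * infDist a ((F ⊔ span ℝ {b} : Submodule ℝ Y) : Set Y))) *
          volAux (F ⊔ span ℝ {b} ⊔ span ℝ {a}) l :=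
        mul_le_mul_of_nonneg_right h (volAux_nonneg _ _)
    _ = 2 * (infDist b (F : Set Y) *
          (infDist a ((F ⊔ span ℝ {b} : Submodule ℝ Y) : Set Y) *
            volAux (F ⊔ span ℝ {b} ⊔ span ℝ {a}) l)) := by ring

lemma volAux_move_front (F : Submodule ℝ Y) (a : Y) (l₁ l₂ : List Y) :
    volAux F (l₁ ++ a :: l₂) ≤ 2 ^ l₁.length * volAux F (a :: (l₁ ++ l₂)) := by
  induction l₁ generalizing F with
  | nil => simp
  | cons b t ih =>
      calc volAux F ((b :: t) ++ a :: l₂)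
          = infDist b (F : Set Y) * volAux (F ⊔ span ℝ {b}) (t ++ a :: l₂) := rfl
        _ ≤ infDist b (F : Set Y) *
            (2 ^ t.length * volAux (F ⊔ span ℝ {b}) (a :: (t ++ l₂))) :=
            mul_le_mul_of_nonneg_left (ih _) infDist_nonneg
        _ = 2 ^ t.length * volAux F (b :: a :: (t ++ l₂)) := by
            simp only [volAux_cons]; ring
        _ ≤ 2 ^ t.length * (2 * volAux F (a :: b :: (t ++ l₂))) :=
            mul_le_mul_of_nonneg_left (volAux_swap F b a _) (by positivity)
        _ = 2 ^ (b :: t).length * volAux F (a :: ((b :: t) ++ l₂)) := by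
            rw [List.length_cons, pow_succ]
            ring_nf
            rfl

lemma volAux_perm (n : ℕ) : ∀ (l l' : List Y) (F : Submodule ℝ Y), l.length = n →
    l.Perm l' → volAux F l ≤ 2 ^ (n * n) * volAux F l' := by
  induction n with
  | zero =>
      intro l l' F hl hp
      rw [List.length_eq_zero_iff.1 hl] at hp ⊢
      rw [hp.nil_eq]
      simp
  | succ n ih =>
      intro l l' F hl hp
      obtain ⟨a, t', rfl⟩ : ∃ a t', l' = a :: t' := by
        cases l' with
        | nil => exact absurd hp.length_eq (by simp [hl])
        | cons a t' => exact ⟨a, t', rfl⟩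
      have ha : a ∈ l := hp.mem_iff.2 List.mem_cons_self
      obtain ⟨l₁, l₂, rfl⟩ := List.append_of_mem ha
      have hperm : (l₁ ++ l₂).Perm t' := by
        have h1 : (l₁ ++ a :: l₂).Perm (a :: (l₁ ++ l₂)) := List.perm_middle
        exact (h1.symm.trans hp).cons_inv
      have hlen : l₁.length + l₂.length = n := by
        rw [List.length_append, List.length_cons] at hl; omega
      calc volAux F (l₁ ++ a :: l₂)
          ≤ 2 ^ l₁.length * volAux F (a :: (l₁ ++ l₂)) := volAux_move_front F a l₁ l₂
        _ = 2 ^ l₁.length * (infDist a (F : Set Y) * volAux (F ⊔ span ℝ {a}) (l₁ ++ l₂)) := rfl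
        _ ≤ 2 ^ l₁.length * (infDist a (F : Set Y) *
              (2 ^ (n * n) * volAux (F ⊔ span ℝ {a}) t')) := by
            refine mul_le_mul_of_nonneg_left (mul_le_mul_of_nonneg_left ?_ infDist_nonneg)
              (by positivity)
            exact ih _ _ _ (by rw [List.length_append]; omega) hperm
        _ = 2 ^ l₁.length * 2 ^ (n * n) * volAux F (a :: t') := by
            simp only [volAux_cons]; ring
        _ ≤ 2 ^ ((n+1) * (n+1)) * volAux F (a :: t') := by
            refine mul_le_mul_of_nonneg_right ?_ (volAux_nonneg _ _)
            rw [← pow_add]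
            refine pow_le_pow_right₀ (by norm_num) (by nlinarith [hlen]) 

lemma volAux_translate {G₀ : Submodule ℝ Y} :
    ∀ {p q : List Y} (G H : Submodule ℝ Y), G₀ ≤ G → H ≤ G →
    List.Forall₂ (fun a b => a - b ∈ G₀) p q → volAux G p ≤ volAux H q := by
  intro p q G H hG0 hHG hpq
  induction hpq generalizing G H with
  | nil => simp
  | @cons a b p q hab _ ih =>
      rw [volAux_cons, volAux_cons]
      have h1 : infDist a (G : Set Y) = infDist b (G : Set Y) := by
        have : a = b + (a - b) := by abel
        rw [this, infDist_add_mem G (hG0 hab) b]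
      refine mul_le_mul ?_ ?_ (volAux_nonneg _ _) infDist_nonneg
      · rw [h1]; exact infDist_anti b hHG
      · refine ih (G ⊔ span ℝ {a}) (H ⊔ span ℝ {b}) (hG0.trans le_sup_left) ?_
        refine sup_le (hHG.trans le_sup_left) ?_
        rw [Submodule.span_le, Set.singleton_subset_iff]
        have : b = a - (a - b) := by abel
        rw [this]
        exact Submodule.sub_mem _ (Submodule.mem_sup_right
          (Submodule.mem_span_singleton_self a)) (Submodule.mem_sup_left (hG0 hab))

lemma volAux_smul_le {ι : Type*} (c : ι → ℝ) (y : ι → Y) :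
    ∀ (l : List ι) (F : Submodule ℝ Y),
    volAux F (l.map (fun i => c i • y i)) ≤ (l.map (fun i => |c i|)).prod * volAux F (l.map y) := by
  intro l
  induction l with
  | nil => simp
  | cons i l ih =>
      intro F
      rw [List.map_cons, List.map_cons, List.map_cons, volAux_cons, volAux_cons,
        List.prod_cons]
      have hprodnn : (0:ℝ) ≤ (l.map (fun i => |c i|)).prod := by
        apply List.prod_nonneg
        intro x hx
        obtain ⟨j, _, rfl⟩ := List.mem_map.1 hx
        exact abs_nonneg _
      rcases eq_or_ne (c i) 0 with h0 | hne
      · rw [h0]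
        simp only [zero_smul]
        rw [infDist_zero_of_mem F.zero_mem]
        simp only [abs_zero, zero_mul]
        nlinarith [volAux_nonneg (F ⊔ span ℝ {y i}) (l.map y), infDist_nonneg (x := y i) (s := (F : Set Y))]
      · have hspan : F ⊔ span ℝ {c i • y i} = F ⊔ span ℝ {y i} := by
          congr 1
          exact Submodule.span_singleton_smul_eq (IsUnit.mk0 _ hne) _
        rw [hspan]
        calc infDist (c i • y i) (F : Set Y) * volAux (F ⊔ span ℝ {y i}) (l.map (fun i => c i • y i))
            ≤ (|c i| * infDist (y i) (F : Set Y)) *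
              ((l.map (fun i => |c i|)).prod * volAux (F ⊔ span ℝ {y i}) (l.map y)) := by
              refine mul_le_mul (infDist_smul_le F _ _) (ih _) (volAux_nonneg _ _) ?_
              exact mul_nonneg (abs_nonneg _) infDist_nonneg
          _ = |c i| * (l.map (fun i => |c i|)).prod *
              (infDist (y i) (F : Set Y) * volAux (F ⊔ span ℝ {y i}) (l.map y)) := by ring

lemma vol_nonneg {k : ℕ} (y : Fin k → Y) : 0 ≤ Vol y :=
  Finset.prod_nonneg fun _ _ => infDist_nonneg

lemma vol_le_prod_norm {k : ℕ} (y : Fin k → Y) : Vol y ≤ ∏ i, ‖y i‖ := by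
  rw [vol_eq_volAux]
  have := volAux_le_prod_norm (⊥ : Submodule ℝ Y) (List.ofFn y)
  calc volAux ⊥ (List.ofFn y) ≤ ((List.ofFn y).map (fun z => ‖z‖)).prod := this
    _ = ∏ i, ‖y i‖ := by rw [List.map_ofFn, List.prod_ofFn]; rfl

section DkLemmas
variable {X : Type*} [NormedAddCommGroup X] [NormedSpace ℝ X]

lemma dk_bddAbove (k : ℕ) (T : X →L[ℝ] Y) :
    BddAbove {v : ℝ | ∃ x : Fin k → X, (∀ i, ‖x i‖ = 1) ∧ v = Vol (fun i => T (x i))} := by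
  refine ⟨‖T‖ ^ k, ?_⟩
  rintro v ⟨x, hx, rfl⟩
  calc Vol (fun i => T (x i)) ≤ ∏ i : Fin k, ‖T (x i)‖ := vol_le_prod_norm _
    _ ≤ ∏ i : Fin k, ‖T‖ := by
        refine Finset.prod_le_prod (fun _ _ => norm_nonneg _) (fun i _ => ?_)
        calc ‖T (x i)‖ ≤ ‖T‖ * ‖x i‖ := T.le_opNorm _
          _ = ‖T‖ := by rw [hx i, mul_one]
    _ = ‖T‖ ^ k := by rw [Finset.prod_const, Finset.card_univ, Fintype.card_fin]

lemma dk_nonneg (k : ℕ) (T : X →L[ℝ] Y) : 0 ≤ Dk k T := by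
  apply Real.sSup_nonneg
  rintro v ⟨x, hx, rfl⟩
  exact vol_nonneg _

lemma vol_le_dk {k : ℕ} (T : X →L[ℝ] Y) {x : Fin k → X} (hx : ∀ i, ‖x i‖ = 1) :
    Vol (fun i => T (x i)) ≤ Dk k T :=
  le_csSup (dk_bddAbove k T) ⟨x, hx, rfl⟩

end DkLemmas

omit [NormedAddCommGroup Y] [NormedSpace ℝ Y] in
lemma list_map_eq_ofFn {α : Type*} (M : List α) (f : α → Y) :
    M.map f = List.ofFn (fun i => f (M.get i)) := by
  conv_lhs => rw [← List.ofFn_get M, List.map_ofFn]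
  rfl

section Select
open Module
lemma select (m : ℕ) : ∀ (W : Type) [AddCommGroup W] [Module ℝ W] [FiniteDimensional ℝ W],
    finrank ℝ W ≤ m → ∀ (k : ℕ) (q : Fin k → W),
    ∃ (r : ℕ) (e : Fin r → Fin k) (μ : Fin k → Fin r → ℝ), r ≤ m ∧ Function.Injective e ∧
      (∀ i a, |μ i a| ≤ 1) ∧ ∀ i, q i = ∑ a, μ i a • q (e a) := by
  induction m with
  | zero =>
      intro W _ _ _ hW k q
      haveI := Module.finrank_zero_iff (R := ℝ) (M := W) |>.1 (le_antisymm hW (Nat.zero_le _))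
      refine ⟨0, Fin.elim0, fun _ => Fin.elim0, le_refl _, fun a => a.elim0, fun i a => a.elim0,
        fun i => ?_⟩
      rw [Finset.univ_eq_empty, Finset.sum_empty]
      exact Subsingleton.elim _ _
  | succ m ih =>
      intro W _ _ _ hW k q
      rcases le_or_gt (finrank ℝ W) m with hWm | hWm
      · obtain ⟨r, e, μ, hr, he, hμ, hq⟩ := ih W hWm k q
        exact ⟨r, e, μ, hr.trans (Nat.le_succ m), he, hμ, hq⟩
      have hr : finrank ℝ W = m + 1 := le_antisymm hW hWm
      rcases Nat.eq_zero_or_pos k with rfl | hk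
      · exact ⟨0, Fin.elim0, fun _ => Fin.elim0, Nat.zero_le _, fun a => a.elim0,
          fun i a => a.elim0, fun i => i.elim0⟩
      haveI : Nonempty (Fin k) := ⟨⟨0, hk⟩⟩
      by_cases hspan : span ℝ (Set.range q) = ⊤
      case neg =>
        -- recurse into the span
        set W' := span ℝ (Set.range q) with hW'
        have hlt : finrank ℝ W' < m + 1 := hr ▸ Submodule.finrank_lt hspan
        have hle : finrank ℝ W' ≤ m := by omega
        set q' : Fin k → W' := fun i => ⟨q i, subset_span ⟨i, rfl⟩⟩ with hq'
        obtain ⟨r, e, μ, hrm, he, hμ, hrep⟩ := ih W' hle k q'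
        refine ⟨r, e, μ, hrm.trans (Nat.le_succ m), he, hμ, fun i => ?_⟩
        have := congrArg (Subtype.val) (hrep i)
        simpa [q', Submodule.coe_sum] using this
      case pos =>
        set b : Basis (Fin (m+1)) ℝ W := (Module.finBasis ℝ W).reindex (finCongr hr) with hb
        set M := b.toMatrix q with hM
        obtain ⟨e, -, hmax⟩ := Finset.exists_max_image Finset.univ
          (fun e : Fin (m+1) → Fin k => |(M.submatrix id e).det|) Finset.univ_nonempty
        have hmax' : ∀ e', |(M.submatrix id e').det| ≤ |(M.submatrix id e).det| :=
          fun e' => hmax e' (Finset.mem_univ _)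
        -- the maximal determinant is nonzero
        have hDne : (M.submatrix id e).det ≠ 0 := by
          -- first: exists e' with det ≠ 0
          obtain ⟨s, hs_sub, hs_span, hs_li⟩ := exists_linearIndependent ℝ (Set.range q)
          rw [hspan] at hs_span
          haveI hfin : Finite s := hs_li.finite
          haveI : Fintype s := Fintype.ofFinite s
          have b2 : Basis s ℝ W := Basis.mk hs_li (by
            rw [Subtype.range_coe, hs_span])
          have hcard : Fintype.card s = m + 1 := by
            rw [← hr, Module.finrank_eq_card_basis b2]
          have g : Fin (m+1) ≃ s := ((Fintype.equivFin s).trans (finCongr hcard)).symm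
          -- choose preimages
          have hpre : ∀ a : Fin (m+1), ∃ i : Fin k, q i = (g a : W) :=
            fun a => (hs_sub (g a).2)
          choose e' he' using hpre
          have hli : LinearIndependent ℝ (q ∘ e') := by
            have : q ∘ e' = (Subtype.val : s → W) ∘ g := by
              funext a; simp [Function.comp, he' a]
            rw [this]
            exact hs_li.comp g g.injective
          have hcard2 : Fintype.card (Fin (m+1)) = finrank ℝ W := by
            simp [hr]
          set b3 := basisOfLinearIndependentOfCardEqFinrank hli hcard2 with hb3
          have hb3c : ⇑b3 = q ∘ e' := coe_basisOfLinearIndependentOfCardEqFinrank _ _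
          have hsub : M.submatrix id e' = b.toMatrix ⇑b3 := by
            ext j a
            rw [Matrix.submatrix_apply, hb3c, hM, Basis.toMatrix_apply, Basis.toMatrix_apply]
            rfl
          have hne : (M.submatrix id e').det ≠ 0 := by
            rw [hsub]
            intro h0
            have := congrArg Matrix.det (b.toMatrix_mul_toMatrix_flip b3)
            rw [Matrix.det_mul, h0, zero_mul, Matrix.det_one] at this
            norm_num at this
          intro hD0
          rw [hD0, abs_zero] at hmax'
          exact hne (abs_eq_zero.1 (le_antisymm (hmax' e') (abs_nonneg _)))
        -- Cramer representation
        set N := M.submatrix id e with hN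
        have heinj : Function.Injective e := by
          intro a a' haa
          by_contra hne
          apply hDne
          exact Matrix.det_zero_of_column_eq hne (fun j => by
            rw [hN, Matrix.submatrix_apply, Matrix.submatrix_apply, haa])
        set μ : Fin k → Fin (m+1) → ℝ :=
          fun i a => (N.cramer (fun j => b.repr (q i) j)) a / N.det with hμ_def
        have hbound : ∀ i a, |μ i a| ≤ 1 := by
          intro i a
          rw [hμ_def]
          have habs : |(N.cramer (fun j => b.repr (q i) j)) a| ≤ |N.det| := by
            rw [Matrix.cramer_apply]
            have : Matrix.updateCol N a (fun j => b.repr (q i) j) =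
                M.submatrix id (Function.update e a i) := by
              ext j a'
              rw [Matrix.updateCol_apply, Matrix.submatrix_apply, Function.update_apply]
              split
              · rw [hM, Basis.toMatrix_apply]; rfl
              · rfl
            rw [this]
            exact hmax' _
          rw [abs_div]
          exact div_le_one_of_le₀ habs (abs_nonneg _)
        refine ⟨m+1, e, μ, le_refl _, heinj, hbound, fun i => ?_⟩
        apply b.ext_elem
        intro j
        have hmv : N.mulVec (μ i) = fun j => b.repr (q i) j := by
          have h1 : μ i = N.det⁻¹ • N.cramer (fun j => b.repr (q i) j) := by
            funext a
            rw [hμ_def]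
            simp [div_eq_inv_mul]
          rw [h1, Matrix.mulVec_smul, Matrix.mulVec_cramer, smul_smul,
            inv_mul_cancel₀ hDne, one_smul]
        have h2 : (b.repr (∑ a, μ i a • q (e a))) j = N.mulVec (μ i) j := by
          rw [map_sum]
          simp only [Finsupp.coe_finset_sum, Finset.sum_apply]
          rw [Matrix.mulVec]
          simp only [dotProduct]
          apply Finset.sum_congr rfl
          intro a _
          rw [map_smul, hN, Matrix.submatrix_apply]
          simp [hM, Basis.toMatrix_apply, mul_comm]
        rw [h2, hmv]

end Select

lemma list_prod_le_pow {c : ℝ} : ∀ {l : List ℝ}, (∀ x ∈ l, 0 ≤ x) → (∀ x ∈ l, x ≤ c) →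
    l.prod ≤ c ^ l.length := by
  intro l
  induction l with
  | nil => simp
  | cons a l ih =>
      intro h0 hc
      rw [List.prod_cons, List.length_cons, pow_succ]
      have hc0 : 0 ≤ c := (h0 a List.mem_cons_self).trans (hc a List.mem_cons_self)
      have := ih (fun x hx => h0 x (List.mem_cons_of_mem _ hx))
        (fun x hx => hc x (List.mem_cons_of_mem _ hx))
      have hprod0 : (0:ℝ) ≤ l.prod := List.prod_nonneg (fun x hx => h0 x (List.mem_cons_of_mem _ hx))
      calc a * l.prod ≤ c * c ^ l.length :=
        mul_le_mul (hc a List.mem_cons_self) this hprod0 hc0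
        _ = c ^ l.length * c := mul_comm _ _

/-- for any closed subspace `V ⊆ X` of codimension `m` and any `k > m`, there is
a constant `C = C(k,m)` with `D_k(T) ≤ C · D_m(T) · D_{k−m}(T|_V)` for every bounded linear
`T : X → Y` between Banach spaces. -/
theorem stmt18 (k m : ℕ) (hm : 1 ≤ m) (hkm : m < k) :
    ∃ C : ℝ, 0 < C ∧
      ∀ (X Y : Type) [NormedAddCommGroup X] [NormedSpace ℝ X] [CompleteSpace X]
        [NormedAddCommGroup Y] [NormedSpace ℝ Y] [CompleteSpace Y]
        (T : X →L[ℝ] Y) (V : Submodule ℝ X),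
        IsClosed (V : Set X) →
        Module.finrank ℝ (X ⧸ V) = m →
        Dk k T ≤ C * Dk m T * Dk (k - m) (T.comp V.subtypeL) := by
  classical
  refine ⟨2 ^ (k * k) * (1 + m) ^ (k - m), by positivity, ?_⟩
  intro X Y _ _ _ _ _ _ T V hVc hfr
  set C : ℝ := 2 ^ (k * k) * (1 + m) ^ (k - m) with hC
  have hC0 : (0:ℝ) < C := by positivity
  have hRHS0 : 0 ≤ C * Dk m T * Dk (k - m) (T.comp V.subtypeL) :=
    mul_nonneg (mul_nonneg hC0.le (dk_nonneg _ _)) (dk_nonneg _ _)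
  apply Real.sSup_le _ hRHS0
  rintro val ⟨x, hx, rfl⟩
  -- quotient space
  haveI : FiniteDimensional ℝ (X ⧸ V) :=
    FiniteDimensional.of_finrank_pos (by rw [hfr]; omega)
  obtain ⟨r, e, μ, hrm, heinj, hμ, hrep⟩ :=
    select m (X ⧸ V) (le_of_eq hfr) k (fun i => V.mkQ (x i))
  -- the correction vectors
  set v : Fin k → X := fun i => x i - ∑ a, μ i a • x (e a) with hv
  have hv_mem : ∀ i, v i ∈ V := by
    intro i
    rw [← Submodule.Quotient.mk_eq_zero V]
    have : V.mkQ (v i) = V.mkQ (x i) - ∑ a, μ i a • V.mkQ (x (e a)) := by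
      rw [hv]
      simp [map_sub, map_sum, map_smul]
    rw [show Submodule.Quotient.mk (v i) = V.mkQ (v i) from rfl, this, hrep i]
    simp
  have hv_norm : ∀ i, ‖v i‖ ≤ 1 + m := by
    intro i
    rw [hv]
    calc ‖x i - ∑ a, μ i a • x (e a)‖ ≤ ‖x i‖ + ‖∑ a, μ i a • x (e a)‖ := norm_sub_le _ _
      _ ≤ 1 + ∑ a : Fin r, ‖μ i a • x (e a)‖ := by
          rw [hx i]
          exact add_le_add le_rfl (norm_sum_le _ _)
      _ ≤ 1 + ∑ a : Fin r, 1 := by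
          refine add_le_add le_rfl (Finset.sum_le_sum fun a _ => ?_)
          rw [norm_smul, hx (e a), mul_one, Real.norm_eq_abs]
          exact hμ i a
      _ = 1 + r := by simp
      _ ≤ 1 + m := by
          have : (r:ℝ) ≤ m := Nat.cast_le.2 hrm
          linarith
  -- lists of indices
  set Tx : Fin k → Y := fun i => T (x i) with hTx
  set LA : List (Fin k) := List.ofFn e with hLA
  have hLAlen : LA.length = r := by simp [hLA]
  have hLAnodup : LA.Nodup := List.nodup_ofFn.2 heinj
  set p : Fin k → Bool := fun i => decide (i ∈ LA) with hp
  set Lrest : List (Fin k) := (List.finRange k).filter (fun i => !p i) with hLrest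
  have hfilter_perm : ((List.finRange k).filter p).Perm LA := by
    rw [List.perm_ext_iff_of_nodup ((List.nodup_finRange k).filter p) hLAnodup]
    intro a
    simp [hp, List.mem_filter, List.mem_finRange]
  have hperm : (LA ++ Lrest).Perm (List.finRange k) :=
    ((hfilter_perm.symm).append_right Lrest).trans (List.filter_append_perm p (List.finRange k))
  have hlen_sum : LA.length + Lrest.length = k := by
    have := hperm.length_eq
    simpa [List.length_append] using this
  have hLrestlen : Lrest.length = k - r := by omega
  set LB1 : List (Fin k) := Lrest.take (m - r) with hLB1
  set LB : List (Fin k) := Lrest.drop (m - r) with hLB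
  set M₁ : List (Fin k) := LA ++ LB1 with hM₁
  have hM₁len : M₁.length = m := by
    rw [hM₁, List.length_append, hLAlen, hLB1, List.length_take, hLrestlen]
    omega
  have hLBlen : LB.length = k - m := by
    rw [hLB, List.length_drop, hLrestlen]
    omega
  have hsplit : M₁ ++ LB = LA ++ Lrest := by
    rw [hM₁, List.append_assoc, hLB1, hLB, List.take_append_drop]
  -- permutation step
  have step2 : volAux ⊥ ((List.finRange k).map Tx) ≤
      2 ^ (k * k) * volAux ⊥ ((M₁ ++ LB).map Tx) := by
    refine volAux_perm k _ _ ⊥ (by simp) ?_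
    rw [hsplit]
    exact (hperm.symm).map Tx
  -- split
  set G₁ : Submodule ℝ Y := Submodule.span ℝ {y | y ∈ M₁.map Tx} with hG₁
  have step3 : volAux ⊥ ((M₁ ++ LB).map Tx) =
      volAux ⊥ (M₁.map Tx) * volAux G₁ (LB.map Tx) := by
    rw [List.map_append, volAux_append, bot_sup_eq]
  -- first factor
  have step4 : volAux ⊥ (M₁.map Tx) ≤ Dk m T := by
    rw [list_map_eq_ofFn, ← vol_eq_volAux]
    have h := vol_le_dk (k := M₁.length) T (x := fun i => x (M₁.get i)) (fun i => hx _)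
    have hDkeq : Dk M₁.length T = Dk m T := by rw [hM₁len]
    rw [hDkeq] at h
    exact h
  have h4nn : 0 ≤ volAux ⊥ (M₁.map Tx) := volAux_nonneg _ _
  -- second factor: translate into V
  have hsubmem : ∀ b : Fin k, Tx b - T (v b) ∈ Submodule.span ℝ {y | y ∈ LA.map Tx} := by
    intro b
    have : Tx b - T (v b) = ∑ a, μ b a • Tx (e a) := by
      rw [hTx, hv]
      simp [map_sub, map_sum, map_smul]
    rw [this]
    refine Submodule.sum_mem _ fun a _ => Submodule.smul_mem _ _ (Submodule.subset_span ?_)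
    exact List.mem_map.2 ⟨e a, by simp [hLA, List.mem_ofFn], rfl⟩
  have hG₀le : Submodule.span ℝ {y | y ∈ LA.map Tx} ≤ G₁ := by
    rw [hG₁]
    apply Submodule.span_mono
    intro y hy
    rcases List.mem_map.1 hy with ⟨b, hb, rfl⟩
    exact List.mem_map.2 ⟨b, by rw [hM₁]; exact List.mem_append_left _ hb, rfl⟩
  have step5 : volAux G₁ (LB.map Tx) ≤ volAux ⊥ (LB.map (fun b => T (v b))) := by
    refine volAux_translate G₁ ⊥ hG₀le bot_le ?_
    rw [List.forall₂_map_left_iff, List.forall₂_map_right_iff]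
    exact List.forall₂_same.2 fun b _ => hsubmem b
  have h5nn : 0 ≤ volAux G₁ (LB.map Tx) := volAux_nonneg _ _
  -- now bound the V part
  have step6 : volAux ⊥ (LB.map (fun b => T (v b))) ≤
      ((1:ℝ) + m) ^ (k - m) * Dk (k - m) (T.comp V.subtypeL) := by
    by_cases hzero : ∃ b ∈ LB, v b = 0
    · obtain ⟨b, hb, hb0⟩ := hzero
      have : volAux ⊥ (LB.map (fun b => T (v b))) = 0 := by
        apply volAux_zero_mem
        exact List.mem_map.2 ⟨b, hb, by rw [hb0, map_zero]⟩
      rw [this]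
      exact mul_nonneg (by positivity) (dk_nonneg _ _)
    push_neg at hzero
    set u : Fin k → V := fun b => ‖v b‖⁻¹ • ⟨v b, hv_mem b⟩ with hu
    have hmapeq : LB.map (fun b => T (v b)) =
        LB.map (fun b => ‖v b‖ • T ((u b : X))) := by
      apply List.map_congr_left
      intro b hb
      have hvb := hzero b hb
      rw [hu]
      simp only [Submodule.coe_smul]
      rw [← map_smul, smul_smul, mul_inv_cancel₀ (norm_ne_zero_iff.2 hvb), one_smul]
    rw [hmapeq]
    calc volAux ⊥ (LB.map (fun b => ‖v b‖ • T ((u b : X))))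
        ≤ (LB.map (fun b => |‖v b‖|)).prod * volAux ⊥ (LB.map (fun b => T ((u b : X)))) :=
          volAux_smul_le _ _ LB ⊥
      _ ≤ ((1:ℝ) + m) ^ (k - m) * Dk (k - m) (T.comp V.subtypeL) := by
          refine mul_le_mul ?_ ?_ (volAux_nonneg _ _) (by positivity)
          · have := list_prod_le_pow (c := (1:ℝ) + m) (l := LB.map (fun b => |‖v b‖|))
              (by intro y hy; rcases List.mem_map.1 hy with ⟨b, _, rfl⟩; positivity)
              (by intro y hy; rcases List.mem_map.1 hy with ⟨b, _, rfl⟩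
                  rw [abs_norm]; exact hv_norm b)
            rwa [List.length_map, hLBlen] at this
          · rw [list_map_eq_ofFn, ← vol_eq_volAux]
            have hnorm : ∀ i : Fin LB.length, ‖u (LB.get i)‖ = 1 := by
              intro i
              have hvb := hzero (LB.get i) (List.get_mem LB i)
              rw [hu]
              simp only [norm_smul, norm_inv, norm_norm, Real.norm_eq_abs, abs_inv, abs_norm]
              rw [show ‖(⟨v (LB.get i), hv_mem _⟩ : V)‖ = ‖v (LB.get i)‖ from rfl]
              exact inv_mul_cancel₀ (norm_ne_zero_iff.2 hvb)
            have h := vol_le_dk (k := LB.length) (T.comp V.subtypeL)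
              (x := fun i => u (LB.get i)) hnorm
            have hDkeq : Dk LB.length (T.comp V.subtypeL) = Dk (k - m) (T.comp V.subtypeL) := by
              rw [hLBlen]
            rw [hDkeq] at h
            exact h
      _ = ((1:ℝ) + m) ^ (k - m) * Dk (k - m) (T.comp V.subtypeL) := rfl
  -- final assembly
  have bridge : Vol (fun i => T (x i)) = volAux ⊥ ((List.finRange k).map Tx) := by
    rw [← List.ofFn_eq_map, ← vol_eq_volAux]
  calc Vol (fun i => T (x i)) = volAux ⊥ ((List.finRange k).map Tx) := bridge
    _ ≤ 2 ^ (k * k) * volAux ⊥ ((M₁ ++ LB).map Tx) := step2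
    _ = 2 ^ (k * k) * (volAux ⊥ (M₁.map Tx) * volAux G₁ (LB.map Tx)) := by rw [step3]
    _ ≤ 2 ^ (k * k) * (Dk m T * (volAux ⊥ (LB.map (fun b => T (v b))))) := by
        refine mul_le_mul_of_nonneg_left ?_ (by positivity)
        exact mul_le_mul step4 step5 h5nn (dk_nonneg _ _)
    _ ≤ 2 ^ (k * k) * (Dk m T * (((1:ℝ) + m) ^ (k - m) * Dk (k - m) (T.comp V.subtypeL))) := by
        refine mul_le_mul_of_nonneg_left (mul_le_mul_of_nonneg_left step6 (dk_nonneg _ _))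
          (by positivity)
    _ = C * Dk m T * Dk (k - m) (T.comp V.subtypeL) := by
        rw [hC]; push_cast; ring
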